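/- Matrix Lagrangian dual transform: for Hermitian positive semidefinite n×n matrices Q and Γ, log det(I+Q) ≥ log det(I+Γ) + n − Tr((I+Γ)(I+Q)^{-1}), with equality if and only if Q = Γ. -/

import Mathlib

open Matrix ComplexOrder

variable {m : Type*} [Fintype m] [DecidableEq m]

lemma trace_eq_sum_eigs {A : Matrix m m ℂ} (hA : A.IsHermitian) :
    A.trace = ∑ i, (hA.eigenvalues i : ℂ) := by
  conv_lhs => rw [hA.spectral_theorem]
  rw [Unitary.conjStarAlgAut_apply, Matrix.trace_mul_cycle,
    (Matrix.mem_unitaryGroup_iff').mp (hA.eigenvectorUnitary).2, one_mul,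
    Matrix.trace_diagonal]
  rfl

lemma eq_one_of_eigs_one {A : Matrix m m ℂ} (hA : A.IsHermitian)
    (h : ∀ i, hA.eigenvalues i = 1) : A = 1 := by
  conv_lhs => rw [hA.spectral_theorem]
  have h1 : RCLike.ofReal ∘ hA.eigenvalues = fun _ : m => (1 : ℂ) :=
    funext fun i => by simp [h i]
  rw [h1, Matrix.diagonal_one, Unitary.conjStarAlgAut_apply, mul_one,
    (Matrix.mem_unitaryGroup_iff).mp (hA.eigenvectorUnitary).2]

lemma key_spectral {n : ℕ} {M : Matrix (Fin n) (Fin n) ℂ} (hM : M.PosSemidef)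
    (hd : M.det ≠ 0) :
    Real.log M.det.re ≤ M.trace.re - n ∧
      (Real.log M.det.re = M.trace.re - n ↔ M = 1) := by
  have hH := hM.1
  have hdet : M.det = ((∏ i, hH.eigenvalues i : ℝ) : ℂ) := by
    rw [hH.det_eq_prod_eigenvalues]; push_cast; rfl
  have htr : M.trace = ((∑ i, hH.eigenvalues i : ℝ) : ℂ) := by
    rw [trace_eq_sum_eigs hH]; push_cast; rfl
  have hdre : M.det.re = ∏ i, hH.eigenvalues i := by rw [hdet, Complex.ofReal_re]
  have htre : M.trace.re = ∑ i, hH.eigenvalues i := by rw [htr, Complex.ofReal_re]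
  have hprod_ne : (∏ i, hH.eigenvalues i) ≠ 0 := by
    intro h; exact hd (by rw [hdet, h]; simp)
  have hpos : ∀ i, 0 < hH.eigenvalues i := fun i =>
    (hM.eigenvalues_nonneg i).lt_of_ne' fun h =>
      hprod_ne (Finset.prod_eq_zero (Finset.mem_univ i) h)
  have hlog : Real.log M.det.re = ∑ i, Real.log (hH.eigenvalues i) := by
    rw [hdre, Real.log_prod fun i _ => (hpos i).ne']
  have hle : ∀ i ∈ Finset.univ, Real.log (hH.eigenvalues i) ≤ hH.eigenvalues i - 1 :=
    fun i _ => Real.log_le_sub_one_of_pos (hpos i)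
  have hsub : ∑ i : Fin n, (hH.eigenvalues i - 1) = (∑ i, hH.eigenvalues i) - n := by
    rw [Finset.sum_sub_distrib]; simp
  constructor
  · have := Finset.sum_le_sum hle
    rw [hsub] at this
    rw [hlog, htre]; linarith
  constructor
  · intro he
    have hsum : ∑ i, Real.log (hH.eigenvalues i) = ∑ i : Fin n, (hH.eigenvalues i - 1) := by
      rw [hsub]; rw [hlog, htre] at he; linarith
    have hptwise := (Finset.sum_eq_sum_iff_of_le hle).mp hsum
    refine eq_one_of_eigs_one hH fun i => ?_
    by_contra hne
    exact absurd (hptwise i (Finset.mem_univ i))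
      (Real.log_lt_sub_one_of_pos (hpos i) hne).ne
  · intro h
    subst h
    simp [Matrix.trace_one]

open scoped MatrixOrder in
noncomputable def psdSqrt (A : Matrix m m ℂ) : Matrix m m ℂ := CFC.sqrt A

open scoped MatrixOrder in
lemma psdSqrt_posSemidef {A : Matrix m m ℂ} (hA : A.PosSemidef) : (psdSqrt A).PosSemidef :=
  Matrix.nonneg_iff_posSemidef.mp (CFC.sqrt_nonneg A)

open scoped MatrixOrder in
lemma psdSqrt_mul_self {A : Matrix m m ℂ} (hA : A.PosSemidef) : psdSqrt A * psdSqrt A = A :=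
  CFC.sqrt_mul_sqrt_self A hA.nonneg

theorem matrix_lagrangian_dual_transform
    {n : ℕ} (Q Γ : Matrix (Fin n) (Fin n) ℂ)
    (hQ : Q.PosSemidef) (hΓ : Γ.PosSemidef) :
    Real.log (1 + Γ).det.re + n - ((1 + Γ) * (1 + Q)⁻¹).trace.re ≤
      Real.log (1 + Q).det.re ∧
    (Real.log (1 + Γ).det.re + n - ((1 + Γ) * (1 + Q)⁻¹).trace.re =
      Real.log (1 + Q).det.re ↔ Q = Γ) := by
  classical
  set A := 1 + Q with hAdef
  set B := 1 + Γ with hBdef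
  have hA : A.PosDef := Matrix.PosDef.one.add_posSemidef hQ
  have hB : B.PosDef := Matrix.PosDef.one.add_posSemidef hΓ
  have hAi : A⁻¹.PosDef := hA.inv
  set S := psdSqrt A⁻¹ with hSdef
  have hS : S.PosSemidef := psdSqrt_posSemidef hAi.posSemidef
  have hSS : S * S = A⁻¹ := psdSqrt_mul_self hAi.posSemidef
  set M := S * B * S with hMdef
  have hM : M.PosSemidef := by
    have := hB.posSemidef.conjTranspose_mul_mul_same S
    rwa [hS.1] at this
  have hdetA : A.det ≠ 0 := hA.det_pos.ne'
  have hdetB : B.det ≠ 0 := hB.det_pos.ne'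
  have hdetAi : A⁻¹.det ≠ 0 := hAi.det_pos.ne'
  have hdS : S.det ≠ 0 := by
    intro h
    rw [← hSS, Matrix.det_mul, h, mul_zero] at hdetAi
    exact hdetAi rfl
  have hdetM_eq : M.det = A⁻¹.det * B.det := by
    rw [hMdef, Matrix.det_mul, Matrix.det_mul, ← hSS, Matrix.det_mul]
    ring
  have hdM : M.det ≠ 0 := by
    rw [hdetM_eq]; exact mul_ne_zero hdetAi hdetB
  have htrM : M.trace = (B * A⁻¹).trace := by
    rw [hMdef, Matrix.trace_mul_cycle, hSS, Matrix.trace_mul_comm]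
  have htrre : M.trace.re = (B * A⁻¹).trace.re := by rw [htrM]
  obtain ⟨hkey1, hkey2⟩ := key_spectral hM hdM
  obtain ⟨hare, haim⟩ := Complex.lt_def.mp hA.det_pos
  obtain ⟨hbre, hbim⟩ := Complex.lt_def.mp hB.det_pos
  simp only [Complex.zero_re, Complex.zero_im] at hare haim hbre hbim
  have hAre : A.det = (A.det.re : ℂ) := Complex.ext rfl (by simp [← haim])
  have hBre : B.det = (B.det.re : ℂ) := Complex.ext rfl (by simp [← hbim])
  have hMc : M.det = (((A.det.re)⁻¹ * B.det.re : ℝ) : ℂ) := by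
    rw [hdetM_eq, Matrix.det_nonsing_inv, Ring.inverse_eq_inv']
    conv_lhs => rw [hAre, hBre]
    push_cast; ring
  have hMre : M.det.re = (A.det.re)⁻¹ * B.det.re := by rw [hMc, Complex.ofReal_re]
  have hlogM : Real.log M.det.re = Real.log B.det.re - Real.log A.det.re := by
    rw [hMre, mul_comm, Real.log_mul hbre.ne' (inv_ne_zero hare.ne'), Real.log_inv]
    ring
  constructor
  · rw [htrre, hlogM] at hkey1; linarith
  constructor
  · intro he
    have heq : Real.log M.det.re = M.trace.re - n := by
      rw [hlogM, htrre]; linarith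
    have hM1 := hkey2.mp heq
    have hBA : B = A := by
      calc B = (S⁻¹ * S) * B * (S * S⁻¹) := by
              rw [Matrix.nonsing_inv_mul _ hdS.isUnit, Matrix.mul_nonsing_inv _ hdS.isUnit, one_mul, mul_one]
        _ = S⁻¹ * (S * B * S) * S⁻¹ := by noncomm_ring
        _ = S⁻¹ * 1 * S⁻¹ := by rw [← hMdef, hM1]
        _ = (S * S)⁻¹ := by rw [mul_one, Matrix.mul_inv_rev]
        _ = (A⁻¹)⁻¹ := by rw [hSS]
        _ = A := Matrix.nonsing_inv_nonsing_inv _ hdetA.isUnit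
    rw [hAdef, hBdef] at hBA
    exact (add_left_cancel hBA).symm
  · intro h
    have hBA : B = A := by rw [hAdef, hBdef, h]
    rw [hBA, Matrix.mul_nonsing_inv _ hdetA.isUnit, Matrix.trace_one]
    simp
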